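/- Let A : C_Σ → D_Σ be a functor between categories over Σ such that: (1) for every vertex v of Σ, the functor A_v : C_v → D_v is an equivalence of categories; (2) for every edge e of Σ, the functor A_e : C_e → D_e is fully faithful; and (3) for every 2-dimensional face F of Σ, the functor A_F : C_F → D_F is faithful. Then the induced functor between descent categories A : C(Σ) → D(Σ) is an equivalence of categories. -/

import Mathlib

set_option maxHeartbeats 1000000
set_option synthInstance.maxHeartbeats 400000

open CategoryTheory

universe w v u v' u'

variable {V : Type w} [DecidableEq V]

/-- A face of a simplicial complex `K` on the vertex set `V`. -/
abbrev Face (K : Set (Finset V)) : Type w := {F : Finset V // F ∈ K}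

lemma subPairL (v w : V) : ({v} : Finset V) ⊆ {v, w} := by
  intro x hx
  simp only [Finset.mem_singleton] at hx
  simp [hx]

lemma subPairR (v w : V) : ({w} : Finset V) ⊆ {v, w} := by
  intro x hx
  simp only [Finset.mem_singleton] at hx
  simp [hx]

lemma subTripU (u v w : V) : ({u} : Finset V) ⊆ {u, v, w} := by
  intro x hx
  simp only [Finset.mem_singleton] at hx
  simp [hx]

lemma subTripUV (u v w : V) : ({u, v} : Finset V) ⊆ {u, v, w} := by
  intro x hx
  simp only [Finset.mem_insert, Finset.mem_singleton] at hx ⊢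
  tauto

lemma subTripVW (u v w : V) : ({v, w} : Finset V) ⊆ {u, v, w} := by
  intro x hx
  simp only [Finset.mem_insert, Finset.mem_singleton] at hx ⊢
  tauto

lemma subTripUW (u v w : V) : ({u, w} : Finset V) ⊆ {u, v, w} := by
  intro x hx
  simp only [Finset.mem_insert, Finset.mem_singleton] at hx ⊢
  tauto

/-- A (neutral Tannakian-style) category over a simplicial complex `K`: a category `C F`
for each face `F ∈ K` and a transition functor for each inclusion of faces, strictly
functorial. -/
structure CatOver (K : Set (Finset V)) where
  /-- the category attached to a face -/
  C : Face K → Type u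
  /-- category instances -/
  inst : ∀ F, Category.{v} (C F)
  /-- transition functors -/
  tr : ∀ (F₁ F₂ : Face K), F₁.1 ⊆ F₂.1 → (C F₁ ⥤ C F₂)
  tr_id : ∀ F : Face K, tr F F (subset_refl _) = 𝟭 (C F)
  tr_comp : ∀ (F₁ F₂ F₃ : Face K) (h₁₂ : F₁.1 ⊆ F₂.1) (h₂₃ : F₂.1 ⊆ F₃.1),
    tr F₁ F₃ (h₁₂.trans h₂₃) = tr F₁ F₂ h₁₂ ⋙ tr F₂ F₃ h₂₃

attribute [instance] CatOver.inst

variable {K : Set (Finset V)}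

/-- An object of the descent category attached to a category over `K`: objects `ξ v` over
the vertices, compatible gluing isomorphisms `φ_{vw}` over the edges, satisfying
`φ_{wv} = φ_{vw}⁻¹` and the cocycle condition over the 2-faces. -/
structure DescentObj (D : CatOver.{w, v, u} K) where
  /-- the object over each vertex -/
  ξ : ∀ (v : V) (hv : ({v} : Finset V) ∈ K), D.C ⟨{v}, hv⟩
  /-- the gluing isomorphism over each (directed) edge -/
  φ : ∀ (v w : V) (_ : v ≠ w) (hv : ({v} : Finset V) ∈ K) (hw : ({w} : Finset V) ∈ K)
    (he : ({v, w} : Finset V) ∈ K),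
    (D.tr ⟨{v}, hv⟩ ⟨{v, w}, he⟩ (subPairL v w)).obj (ξ v hv) ≅
      (D.tr ⟨{w}, hw⟩ ⟨{v, w}, he⟩ (subPairR v w)).obj (ξ w hw)
  φ_symm : ∀ (v w : V) (hvw : v ≠ w) (hv : ({v} : Finset V) ∈ K)
    (hw : ({w} : Finset V) ∈ K) (he : ({v, w} : Finset V) ∈ K)
    (he' : ({w, v} : Finset V) ∈ K),
    HEq (φ w v hvw.symm hw hv he') (φ v w hvw hv hw he).symm
  cocycle : ∀ (u v w : V) (huv : u ≠ v) (hvw : v ≠ w) (huw : u ≠ w)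
    (hu : ({u} : Finset V) ∈ K) (hv : ({v} : Finset V) ∈ K) (hw : ({w} : Finset V) ∈ K)
    (heuv : ({u, v} : Finset V) ∈ K) (hevw : ({v, w} : Finset V) ∈ K)
    (heuw : ({u, w} : Finset V) ∈ K) (hF : ({u, v, w} : Finset V) ∈ K),
    eqToIso (Functor.congr_obj
        (D.tr_comp ⟨{u}, hu⟩ ⟨{u, w}, heuw⟩ ⟨{u, v, w}, hF⟩ (subPairL u w)
          (subTripUW u v w)) (ξ u hu)) ≪≫
      (D.tr ⟨{u, w}, heuw⟩ ⟨{u, v, w}, hF⟩ (subTripUW u v w)).mapIso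
        (φ u w huw hu hw heuw) ≪≫
      (eqToIso (Functor.congr_obj
        (D.tr_comp ⟨{w}, hw⟩ ⟨{u, w}, heuw⟩ ⟨{u, v, w}, hF⟩ (subPairR u w)
          (subTripUW u v w)) (ξ w hw))).symm =
    (eqToIso (Functor.congr_obj
        (D.tr_comp ⟨{u}, hu⟩ ⟨{u, v}, heuv⟩ ⟨{u, v, w}, hF⟩ (subPairL u v)
          (subTripUV u v w)) (ξ u hu)) ≪≫
      (D.tr ⟨{u, v}, heuv⟩ ⟨{u, v, w}, hF⟩ (subTripUV u v w)).mapIso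
        (φ u v huv hu hv heuv) ≪≫
      (eqToIso (Functor.congr_obj
        (D.tr_comp ⟨{v}, hv⟩ ⟨{u, v}, heuv⟩ ⟨{u, v, w}, hF⟩ (subPairR u v)
          (subTripUV u v w)) (ξ v hv))).symm) ≪≫
    (eqToIso (Functor.congr_obj
        (D.tr_comp ⟨{v}, hv⟩ ⟨{v, w}, hevw⟩ ⟨{u, v, w}, hF⟩ (subPairL v w)
          (subTripVW u v w)) (ξ v hv)) ≪≫
      (D.tr ⟨{v, w}, hevw⟩ ⟨{u, v, w}, hF⟩ (subTripVW u v w)).mapIso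
        (φ v w hvw hv hw hevw) ≪≫
      (eqToIso (Functor.congr_obj
        (D.tr_comp ⟨{w}, hw⟩ ⟨{v, w}, hevw⟩ ⟨{u, v, w}, hF⟩ (subPairR v w)
          (subTripVW u v w)) (ξ w hw))).symm)

/-- A morphism in the descent category: a compatible family of morphisms over the
vertices. -/
@[ext]
structure DescentHom {D : CatOver.{w, v, u} K} (X Y : DescentObj D) where
  /-- the component over each vertex -/
  ψ : ∀ (v : V) (hv : ({v} : Finset V) ∈ K), X.ξ v hv ⟶ Y.ξ v hv
  comm : ∀ (v w : V) (hvw : v ≠ w) (hv : ({v} : Finset V) ∈ K)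
    (hw : ({w} : Finset V) ∈ K) (he : ({v, w} : Finset V) ∈ K),
    (X.φ v w hvw hv hw he).hom ≫
        (D.tr ⟨{w}, hw⟩ ⟨{v, w}, he⟩ (subPairR v w)).map (ψ w hw) =
      (D.tr ⟨{v}, hv⟩ ⟨{v, w}, he⟩ (subPairL v w)).map (ψ v hv) ≫
        (Y.φ v w hvw hv hw he).hom

/-- The descent category attached to a category over the simplicial complex `K`. -/
instance DescentObj.category (D : CatOver.{w, v, u} K) : Category (DescentObj D) where
  Hom X Y := DescentHom X Y
  id X :=
    { ψ := fun v hv => 𝟙 (X.ξ v hv)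
      comm := by intros; simp }
  comp {X Y Z} f g :=
    { ψ := fun v hv => f.ψ v hv ≫ g.ψ v hv
      comm := by
        intro v w hvw hv hw he
        rw [Functor.map_comp, Functor.map_comp, ← Category.assoc, f.comm, Category.assoc,
          g.comm v w hvw hv hw he, ← Category.assoc] }
  id_comp f := by
    apply DescentHom.ext
    funext v hv
    exact Category.id_comp _
  comp_id f := by
    apply DescentHom.ext
    funext v hv
    exact Category.comp_id _
  assoc f g h := by
    apply DescentHom.ext
    funext v hv
    exact Category.assoc _ _ _

section Induced

variable (D : CatOver.{w, v, u} K) (E : CatOver.{w, v', u'} K)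
variable (A : ∀ F : Face K, D.C F ⥤ E.C F)

/-- The property that a functor `A' : C(Σ) ⥤ D(Σ)` between descent categories is the one
induced componentwise by a family of functors `A_F : C_F ⥤ D_F` commuting with the
transition functors. -/
def IsInduced (A' : DescentObj D ⥤ DescentObj E) : Prop :=
  (∀ (X : DescentObj D) (x : V) (hx : ({x} : Finset V) ∈ K),
      (A'.obj X).ξ x hx = (A ⟨{x}, hx⟩).obj (X.ξ x hx)) ∧
  (∀ (X : DescentObj D) (x y : V) (hxy : x ≠ y) (hx : ({x} : Finset V) ∈ K)
      (hy : ({y} : Finset V) ∈ K) (he : ({x, y} : Finset V) ∈ K),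
      HEq ((A'.obj X).φ x y hxy hx hy he)
        ((A ⟨{x, y}, he⟩).mapIso (X.φ x y hxy hx hy he))) ∧
  (∀ (X Y : DescentObj D) (f : X ⟶ Y) (x : V) (hx : ({x} : Finset V) ∈ K),
      HEq (DescentHom.ψ (A'.map f) x hx) ((A ⟨{x}, hx⟩).map (DescentHom.ψ f x hx)))

end Induced

set_option linter.unusedSectionVars false
section Aux

variable {C₀ : Type*} [Category C₀]

lemma heq_conjIso {X X' Y Y' : C₀} (h1 : X' = X) (h2 : Y = Y') (i : X ≅ Y) :
    HEq ((eqToIso h1) ≪≫ i ≪≫ (eqToIso h2)) i := by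
  subst h1; subst h2
  rw [eqToIso_refl, eqToIso_refl, Iso.trans_refl, Iso.refl_trans]

lemma eq_conj_of_heq {X X' Y Y' : C₀} (hX : X = X') (hY : Y = Y')
    {f : X ⟶ Y} {g : X' ⟶ Y'} (h : HEq f g) :
    f = eqToHom hX ≫ g ≫ eqToHom hY.symm := by
  subst hX; subst hY; simp [eq_of_heq h]

end Aux

section Main

variable {V : Type w} [DecidableEq V] {K : Set (Finset V)}
variable {D : CatOver.{w, v, u} K} {E : CatOver.{w, v', u'} K}
variable {A : ∀ F : Face K, D.C F ⥤ E.C F}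
variable (hA : ∀ (F₁ F₂ : Face K) (h : F₁.1 ⊆ F₂.1),
      D.tr F₁ F₂ h ⋙ A F₂ = A F₁ ⋙ E.tr F₁ F₂ h)

/-- rewrite `E.tr.map (A.map f)` as a conjugate of `A.map (D.tr.map f)`. -/
lemma tr_map_A_map {e F : Face K} (h : e.1 ⊆ F.1) {X Y : D.C e} (f : X ⟶ Y) :
    (E.tr e F h).map ((A e).map f) =
      eqToHom (Functor.congr_obj (hA e F h) X).symm ≫
        (A F).map ((D.tr e F h).map f) ≫ eqToHom (Functor.congr_obj (hA e F h) Y) := by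
  have := Functor.congr_hom (hA e F h) f
  simp only [Functor.comp_map] at this
  rw [this]; simp

lemma A_map_tr_map {e F : Face K} (h : e.1 ⊆ F.1) {X Y : D.C e} (f : X ⟶ Y) :
    (A F).map ((D.tr e F h).map f) =
      eqToHom (Functor.congr_obj (hA e F h) X) ≫
        (E.tr e F h).map ((A e).map f) ≫ eqToHom (Functor.congr_obj (hA e F h) Y).symm := by
  have := Functor.congr_hom (hA e F h) f
  simp only [Functor.comp_map] at this
  rw [this]

lemma tr_tr_map (Ec : CatOver.{w, v', u'} K) {F₁ F₂ F₃ : Face K} (h12 : F₁.1 ⊆ F₂.1)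
    (h23 : F₂.1 ⊆ F₃.1) {X Y : Ec.C F₁} (f : X ⟶ Y) :
    (Ec.tr F₂ F₃ h23).map ((Ec.tr F₁ F₂ h12).map f) =
      eqToHom (Functor.congr_obj (Ec.tr_comp F₁ F₂ F₃ h12 h23) X).symm ≫
        (Ec.tr F₁ F₃ (h12.trans h23)).map f ≫
        eqToHom (Functor.congr_obj (Ec.tr_comp F₁ F₂ F₃ h12 h23) Y) := by
  have := Functor.congr_hom (Ec.tr_comp F₁ F₂ F₃ h12 h23) f
  simp only [Functor.comp_map] at this
  rw [this]; simp

lemma eq_of_conj_eq {C₁ : Type*} [Category C₁] {X X' Y Y' : C₁} (h : X = X') (h' : Y' = Y)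
    {f : X' ⟶ Y'} {g : X ⟶ Y} (hh : eqToHom h ≫ f ≫ eqToHom h' = g) :
    f = eqToHom h.symm ≫ g ≫ eqToHom h'.symm := by
  subst h; subst h'; simp only [eqToHom_refl, Category.id_comp, Category.comp_id] at hh ⊢; exact hh

lemma cancel_theta {C₁ : Type*} {C₂ : Type*} [Category C₁] [Category C₂]
    {F G : C₁ ⥤ C₂} (hFG : F = G) {X Y : C₁} (θ : X ≅ Y)
    (q : F.obj X = G.obj X) (p : F.obj Y = G.obj Y) {W : C₂} (rest : G.obj Y ⟶ W) :
    F.map θ.inv ≫ eqToHom q ≫ G.map θ.hom ≫ rest = eqToHom p ≫ rest := by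
  subst hFG
  simp only [eqToHom_refl, Category.id_comp]
  rw [← Category.assoc, ← Functor.map_comp, Iso.inv_hom_id, CategoryTheory.Functor.map_id]
  simp

lemma induced_symm_aux {x w : V} (hv : ({x}:Finset V) ∈ K) (hw : ({w}:Finset V) ∈ K)
    (e e' : Face K) (hee : e' = e)
    (hL : ({x}:Finset V) ⊆ e.1) (hR : ({w}:Finset V) ⊆ e.1)
    (hL' : ({w}:Finset V) ⊆ e'.1) (hR' : ({x}:Finset V) ⊆ e'.1)
    {ξv : D.C ⟨{x},hv⟩} {ξw : D.C ⟨{w},hw⟩}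
    (φ : (D.tr ⟨{x},hv⟩ e hL).obj ξv ≅ (D.tr ⟨{w},hw⟩ e hR).obj ξw)
    (φ' : (D.tr ⟨{w},hw⟩ e' hL').obj ξw ≅ (D.tr ⟨{x},hv⟩ e' hR').obj ξv)
    (hsym : HEq φ' φ.symm) :
    HEq (eqToIso (Functor.congr_obj (hA ⟨{w},hw⟩ e' hL') ξw).symm ≪≫ (A e').mapIso φ' ≪≫
          eqToIso (Functor.congr_obj (hA ⟨{x},hv⟩ e' hR') ξv))
        ((eqToIso (Functor.congr_obj (hA ⟨{x},hv⟩ e hL) ξv).symm ≪≫ (A e).mapIso φ ≪≫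
          eqToIso (Functor.congr_obj (hA ⟨{w},hw⟩ e hR) ξw)).symm) := by
  subst hee
  cases eq_of_heq hsym
  apply heq_of_eq
  apply Iso.ext
  simp

/-- The object of `E`'s descent category induced by a descent object for `D`. -/
def inducedObj (X : DescentObj D) : DescentObj E where
  ξ x hv := (A ⟨{x}, hv⟩).obj (X.ξ x hv)
  φ x w hvw hv hw he :=
    eqToIso (Functor.congr_obj (hA ⟨{x},hv⟩ ⟨{x,w},he⟩ (subPairL x w)) (X.ξ x hv)).symm ≪≫
    (A ⟨{x,w},he⟩).mapIso (X.φ x w hvw hv hw he) ≪≫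
    eqToIso (Functor.congr_obj (hA ⟨{w},hw⟩ ⟨{x,w},he⟩ (subPairR x w)) (X.ξ w hw))
  φ_symm x w hvw hv hw he he' := by
    exact induced_symm_aux hA hv hw ⟨{x,w},he⟩ ⟨{w,x},he'⟩
      (Subtype.ext (Finset.pair_comm w x))
      (subPairL x w) (subPairR x w) (subPairL w x) (subPairR w x)
      (X.φ x w hvw hv hw he) (X.φ w x hvw.symm hw hv he')
      (X.φ_symm x w hvw hv hw he he')
  cocycle a b c hab hbc hac ha hb hc heab hebc heac hF := by
    have hc0 := congrArg Iso.hom (X.cocycle a b c hab hbc hac ha hb hc heab hebc heac hF)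
    simp only [Iso.trans_hom, eqToIso.hom, Iso.symm_hom, eqToIso.inv, Category.assoc] at hc0
    have hc2 := congrArg ((A ⟨{a,b,c},hF⟩).map) hc0
    simp only [Functor.map_comp, eqToHom_map, Functor.mapIso_hom] at hc2
    apply Iso.ext
    simp only [Iso.trans_hom, eqToIso.hom, Iso.symm_hom, eqToIso.inv, Functor.mapIso_hom,
      Functor.map_comp, eqToHom_map, Category.assoc, tr_map_A_map hA]
    simp only [eqToHom_trans, eqToHom_trans_assoc]
    have g1 : (E.tr ⟨{a},ha⟩ ⟨{a,b,c},hF⟩ (subTripU a b c)).obj ((A ⟨{a},ha⟩).obj (X.ξ a ha))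
        = (A ⟨{a,b,c},hF⟩).obj ((D.tr ⟨{a},ha⟩ ⟨{a,b,c},hF⟩ (subTripU a b c)).obj (X.ξ a ha)) :=
      (Functor.congr_obj (hA ⟨{a},ha⟩ ⟨{a,b,c},hF⟩ (subTripU a b c)) (X.ξ a ha)).symm
    have g2 : (A ⟨{a,b,c},hF⟩).obj ((D.tr ⟨{c},hc⟩ ⟨{a,b,c},hF⟩ ((subPairR a c).trans (subTripUW a b c))).obj (X.ξ c hc))
        = (E.tr ⟨{c},hc⟩ ⟨{a,b,c},hF⟩ ((subPairR a c).trans (subTripUW a b c))).obj ((A ⟨{c},hc⟩).obj (X.ξ c hc)) :=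
      Functor.congr_obj (hA ⟨{c},hc⟩ ⟨{a,b,c},hF⟩ ((subPairR a c).trans (subTripUW a b c))) (X.ξ c hc)
    have hc3 := congrArg (fun t => eqToHom g1 ≫ t ≫ eqToHom g2) hc2
    simp only [Category.assoc, eqToHom_trans, eqToHom_trans_assoc] at hc3
    exact hc3

/-- The induced functor on descent categories. -/
def inducedDescFunctor : DescentObj D ⥤ DescentObj E where
  obj X := inducedObj hA X
  map {X Y} f :=
    { ψ := fun x hx => (A ⟨{x}, hx⟩).map (f.ψ x hx)
      comm := by
        intro x y hxy hx hy he
        have hc := congrArg ((A ⟨{x,y},he⟩).map) (f.comm x y hxy hx hy he)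
        simp only [Functor.map_comp] at hc
        show (_ ≪≫ _ ≪≫ _).hom ≫ _ = _ ≫ (_ ≪≫ _ ≪≫ _).hom
        dsimp only [inducedObj]
        simp only [Iso.trans_hom, eqToIso.hom, Functor.mapIso_hom, Category.assoc,
          tr_map_A_map hA]
        simp only [eqToHom_trans_assoc, eqToHom_trans, eqToHom_refl, Category.id_comp,
          Category.assoc, ← Functor.map_comp_assoc]
        rw [f.comm x y hxy hx hy he] }
  map_id X := by
    apply DescentHom.ext; funext x hx; exact (A ⟨{x},hx⟩).map_id _
  map_comp f g := by
    apply DescentHom.ext; funext x hx; exact (A ⟨{x},hx⟩).map_comp _ _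

lemma isInduced_inducedDescFunctor : IsInduced D E A (inducedDescFunctor hA) := by
  refine ⟨fun X x hx => rfl, fun X x y hxy hx hy he => ?_, fun X Y f x hx => HEq.rfl⟩
  exact heq_conjIso _ _ _

lemma descentObj_ext {X Y : DescentObj E} (hξ : X.ξ = Y.ξ) (hφ : HEq X.φ Y.φ) : X = Y := by
  cases X; cases Y
  cases hξ
  cases eq_of_heq hφ
  rfl

lemma descent_comp_ψ {X Y Z : DescentObj E} (f : X ⟶ Y) (g : Y ⟶ Z) (x : V)
    (hx : ({x} : Finset V) ∈ K) : (f ≫ g).ψ x hx = f.ψ x hx ≫ g.ψ x hx := rfl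

lemma descent_eqToHom_ψ {X Y : DescentObj E} (h : X = Y) (x : V) (hx : ({x} : Finset V) ∈ K)
    (h' : X.ξ x hx = Y.ξ x hx) : (eqToHom h).ψ x hx = eqToHom h' := by subst h; rfl

lemma isInduced_unique {A' A'' : DescentObj D ⥤ DescentObj E}
    (h' : IsInduced D E A A') (h'' : IsInduced D E A A'') : A' = A'' := by
  have hobj : ∀ X, A'.obj X = A''.obj X := by
    intro X
    apply descentObj_ext
    · funext x hx; rw [h'.1 X x hx, h''.1 X x hx]
    · apply Function.hfunext rfl; intro x x' h; cases eq_of_heq h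
      apply Function.hfunext rfl; intro y y' h; cases eq_of_heq h
      apply Function.hfunext rfl; intro hxy hxy' _
      apply Function.hfunext rfl; intro hx hx' _
      apply Function.hfunext rfl; intro hy hy' _
      apply Function.hfunext rfl; intro he he' _
      exact (h'.2.1 X x y hxy hx hy he).trans (h''.2.1 X x y hxy hx hy he).symm
  refine CategoryTheory.Functor.ext hobj (fun X Y f => ?_)
  apply DescentHom.ext
  funext x hx
  have hX : (A'.obj X).ξ x hx = (A''.obj X).ξ x hx := by rw [h'.1, h''.1]
  have hY : (A'.obj Y).ξ x hx = (A''.obj Y).ξ x hx := by rw [h'.1, h''.1]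
  rw [descent_comp_ψ, descent_comp_ψ, descent_eqToHom_ψ _ _ _ hX,
    descent_eqToHom_ψ _ _ _ hY.symm]
  exact eq_conj_of_heq hX hY ((h'.2.2 X Y f x hx).trans (h''.2.2 X Y f x hx).symm)

lemma induced_faithful (hvf : ∀ (x : V) (hx : ({x} : Finset V) ∈ K), (A ⟨{x}, hx⟩).Faithful) :
    (inducedDescFunctor hA).Faithful := by
  constructor
  intro X Y f g h
  apply DescentHom.ext; funext x hx
  letI := hvf x hx
  apply (A ⟨{x}, hx⟩).map_injective
  exact congrFun (congrFun (congrArg DescentHom.ψ h) x) hx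

lemma induced_full
    (hvfull : ∀ (x : V) (hx : ({x} : Finset V) ∈ K), (A ⟨{x}, hx⟩).Full)
    (hedgefaithful : ∀ (x y : V), x ≠ y → ∀ he : ({x, y} : Finset V) ∈ K,
      (A ⟨{x, y}, he⟩).Faithful) :
    (inducedDescFunctor hA).Full := by
  constructor
  intro X Y g
  refine ⟨{ ψ := fun x hx => letI := hvfull x hx; (A ⟨{x}, hx⟩).preimage (g.ψ x hx)
            comm := ?_ }, ?_⟩
  · intro x y hxy hx hy he
    letI := hedgefaithful x y hxy he
    letI := hvfull x hx
    letI := hvfull y hy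
    apply (A ⟨{x, y}, he⟩).map_injective
    have hg := g.comm x y hxy hx hy he
    dsimp only [inducedDescFunctor, inducedObj] at hg
    simp only [Iso.trans_hom, eqToIso.hom, Functor.mapIso_hom,
      Category.assoc, eqToIso.inv, Iso.symm_hom] at hg
    simp only [Functor.map_comp, A_map_tr_map hA, Functor.map_preimage]
    have hg2 := congrArg (fun t =>
      eqToHom (Functor.congr_obj (hA ⟨{x},hx⟩ ⟨{x,y},he⟩ (subPairL x y)) (X.ξ x hx)) ≫ t ≫
      eqToHom (Functor.congr_obj (hA ⟨{y},hy⟩ ⟨{x,y},he⟩ (subPairR x y)) (Y.ξ y hy)).symm) hg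
    simp only [Category.assoc, eqToHom_trans, eqToHom_trans_assoc, eqToHom_refl,
      Category.id_comp, Category.comp_id] at hg2
    erw [Functor.map_preimage, Functor.map_preimage]
    simpa only [Category.assoc] using hg2
  · apply DescentHom.ext; funext x hx
    letI := hvfull x hx
    exact (A ⟨{x}, hx⟩).map_preimage (g.ψ x hx)

lemma preObj_symm_aux {x y : V} (hx : ({x}:Finset V) ∈ K) (hy : ({y}:Finset V) ∈ K)
    (e e' : Face K) (hee : e' = e)
    (hL : ({x}:Finset V) ⊆ e.1) (hR : ({y}:Finset V) ⊆ e.1)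
    (hL' : ({y}:Finset V) ⊆ e'.1) (hR' : ({x}:Finset V) ⊆ e'.1)
    [hfullE : (A e).Full] [hfaithE : (A e).Faithful]
    [hfullE' : (A e').Full] [hfaithE' : (A e').Faithful]
    {ξx : D.C ⟨{x},hx⟩} {ξy : D.C ⟨{y},hy⟩} {ηx : E.C ⟨{x},hx⟩} {ηy : E.C ⟨{y},hy⟩}
    (θx : (A ⟨{x},hx⟩).obj ξx ≅ ηx) (θy : (A ⟨{y},hy⟩).obj ξy ≅ ηy)
    (ψ : (E.tr ⟨{x},hx⟩ e hL).obj ηx ≅ (E.tr ⟨{y},hy⟩ e hR).obj ηy)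
    (ψ' : (E.tr ⟨{y},hy⟩ e' hL').obj ηy ≅ (E.tr ⟨{x},hx⟩ e' hR').obj ηx)
    (hsym : HEq ψ' ψ.symm) :
    HEq ((A e').preimageIso
          (eqToIso (Functor.congr_obj (hA ⟨{y},hy⟩ e' hL') ξy) ≪≫
           (E.tr ⟨{y},hy⟩ e' hL').mapIso θy ≪≫ ψ' ≪≫
           ((E.tr ⟨{x},hx⟩ e' hR').mapIso θx).symm ≪≫
           eqToIso (Functor.congr_obj (hA ⟨{x},hx⟩ e' hR') ξx).symm))
        (((A e).preimageIso
          (eqToIso (Functor.congr_obj (hA ⟨{x},hx⟩ e hL) ξx) ≪≫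
           (E.tr ⟨{x},hx⟩ e hL).mapIso θx ≪≫ ψ ≪≫
           ((E.tr ⟨{y},hy⟩ e hR).mapIso θy).symm ≪≫
           eqToIso (Functor.congr_obj (hA ⟨{y},hy⟩ e hR) ξy).symm)).symm) := by
  subst hee
  cases eq_of_heq hsym
  apply heq_of_eq
  apply Iso.ext
  simp

section EssSurj

variable (hvert : ∀ (x : V) (hx : ({x} : Finset V) ∈ K), (A ⟨{x}, hx⟩).IsEquivalence)
variable (Y : DescentObj E)

/-- The chosen preimage object over each vertex. -/
noncomputable def preXi (x : V) (hx : ({x} : Finset V) ∈ K) : D.C ⟨{x}, hx⟩ :=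
  letI := hvert x hx
  (A ⟨{x}, hx⟩).asEquivalence.inverse.obj (Y.ξ x hx)

/-- The counit isomorphism over each vertex. -/
noncomputable def thetaIso (x : V) (hx : ({x} : Finset V) ∈ K) :
    (A ⟨{x}, hx⟩).obj (preXi hvert Y x hx) ≅ Y.ξ x hx :=
  letI := hvert x hx
  (A ⟨{x}, hx⟩).asEquivalence.counitIso.app (Y.ξ x hx)

/-- The edge isomorphism, before taking preimages. -/
noncomputable def bigIso (x y : V) (hxy : x ≠ y) (hx : ({x} : Finset V) ∈ K)
    (hy : ({y} : Finset V) ∈ K) (he : ({x, y} : Finset V) ∈ K) :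
    (A ⟨{x, y}, he⟩).obj ((D.tr ⟨{x}, hx⟩ ⟨{x, y}, he⟩ (subPairL x y)).obj
      (preXi hvert Y x hx)) ≅
    (A ⟨{x, y}, he⟩).obj ((D.tr ⟨{y}, hy⟩ ⟨{x, y}, he⟩ (subPairR x y)).obj
      (preXi hvert Y y hy)) :=
  eqToIso (Functor.congr_obj (hA ⟨{x}, hx⟩ ⟨{x, y}, he⟩ (subPairL x y)) _) ≪≫
  (E.tr ⟨{x}, hx⟩ ⟨{x, y}, he⟩ (subPairL x y)).mapIso (thetaIso hvert Y x hx) ≪≫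
  Y.φ x y hxy hx hy he ≪≫
  ((E.tr ⟨{y}, hy⟩ ⟨{x, y}, he⟩ (subPairR x y)).mapIso (thetaIso hvert Y y hy)).symm ≪≫
  eqToIso (Functor.congr_obj (hA ⟨{y}, hy⟩ ⟨{x, y}, he⟩ (subPairR x y)) _).symm

variable (hedgefull : ∀ (x y : V), x ≠ y → ∀ he : ({x, y} : Finset V) ∈ K,
      (A ⟨{x, y}, he⟩).Full)
variable (hedgefaithful : ∀ (x y : V), x ≠ y → ∀ he : ({x, y} : Finset V) ∈ K,
      (A ⟨{x, y}, he⟩).Faithful)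
variable (hfacefaithful : ∀ (x y z : V), x ≠ y → y ≠ z → x ≠ z →
      ∀ hF : ({x, y, z} : Finset V) ∈ K, (A ⟨{x, y, z}, hF⟩).Faithful)

/-- The preimage descent object. -/
noncomputable def preObj : DescentObj D where
  ξ := preXi hvert Y
  φ x y hxy hx hy he :=
    letI := hedgefull x y hxy he
    letI := hedgefaithful x y hxy he
    (A ⟨{x, y}, he⟩).preimageIso (bigIso hA hvert Y x y hxy hx hy he)
  φ_symm x y hxy hx hy he he' := by
    letI := hedgefull x y hxy he
    letI := hedgefaithful x y hxy he
    letI := hedgefull y x hxy.symm he'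
    letI := hedgefaithful y x hxy.symm he'
    exact preObj_symm_aux hA hx hy ⟨{x,y},he⟩ ⟨{y,x},he'⟩
      (Subtype.ext (Finset.pair_comm y x))
      (subPairL x y) (subPairR x y) (subPairL y x) (subPairR y x)
      (thetaIso hvert Y x hx) (thetaIso hvert Y y hy)
      (Y.φ x y hxy hx hy he) (Y.φ y x hxy.symm hy hx he')
      (Y.φ_symm x y hxy hx hy he he')
  cocycle a b c hab hbc hac ha hb hc heab hebc heac hF := by
    letI := hfacefaithful a b c hab hbc hac hF
    letI := hedgefull a b hab heab; letI := hedgefaithful a b hab heab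
    letI := hedgefull b c hbc hebc; letI := hedgefaithful b c hbc hebc
    letI := hedgefull a c hac heac; letI := hedgefaithful a c hac heac
    apply Iso.ext
    apply (A ⟨{a,b,c},hF⟩).map_injective
    have hY := congrArg Iso.hom (Y.cocycle a b c hab hbc hac ha hb hc heab hebc heac hF)
    simp only [Iso.trans_hom, eqToIso.hom, Iso.symm_hom, eqToIso.inv, Category.assoc,
      Functor.mapIso_hom, Functor.mapIso_inv, eqToHom_trans, eqToHom_trans_assoc] at hY
    simp only [Iso.trans_hom, eqToIso.hom, Iso.symm_hom, eqToIso.inv, Category.assoc,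
      Functor.map_comp, eqToHom_map, Functor.mapIso_hom, Functor.mapIso_inv,
      A_map_tr_map hA, Functor.preimageIso_hom, Functor.preimageIso_inv,
      Functor.map_preimage, bigIso, tr_tr_map, eqToHom_trans, eqToHom_trans_assoc]
    rw [cancel_theta rfl (thetaIso hvert Y b hb)]
    rw [eq_of_conj_eq _ _ hY]
    simp only [Category.assoc, eqToHom_trans, eqToHom_trans_assoc]
    rfl

/-- The comparison isomorphism for essential surjectivity. -/
lemma induced_essSurj_iso :
    Nonempty ((inducedDescFunctor hA).obj
      (preObj hA hvert Y hedgefull hedgefaithful hfacefaithful) ≅ Y) := by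
  refine ⟨{
    hom := { ψ := fun x hx => (thetaIso hvert Y x hx).hom
             comm := ?_ }
    inv := { ψ := fun x hx => (thetaIso hvert Y x hx).inv
             comm := ?_ }
    hom_inv_id := ?_
    inv_hom_id := ?_ }⟩
  · intro x y hxy hx hy he
    letI := hedgefull x y hxy he; letI := hedgefaithful x y hxy he
    dsimp only [inducedDescFunctor, inducedObj, preObj]
    simp only [Iso.trans_hom, eqToIso.hom, Iso.symm_hom, eqToIso.inv, Functor.mapIso_hom,
      Functor.mapIso_inv, Category.assoc, Functor.preimageIso_hom, Functor.map_preimage,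
      bigIso, eqToHom_trans, eqToHom_trans_assoc, eqToHom_refl, Category.id_comp]
    simp [← Functor.map_comp_assoc]
  · intro x y hxy hx hy he
    letI := hedgefull x y hxy he; letI := hedgefaithful x y hxy he
    dsimp only [inducedDescFunctor, inducedObj, preObj]
    simp only [Iso.trans_hom, eqToIso.hom, Iso.symm_hom, eqToIso.inv, Functor.mapIso_hom,
      Functor.mapIso_inv, Category.assoc, Functor.preimageIso_hom, Functor.map_preimage,
      bigIso, eqToHom_trans, eqToHom_trans_assoc, eqToHom_refl, Category.id_comp]
    simp [← Functor.map_comp_assoc]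
  · apply DescentHom.ext; funext x hx
    exact (thetaIso hvert Y x hx).hom_inv_id
  · apply DescentHom.ext; funext x hx
    exact (thetaIso hvert Y x hx).inv_hom_id

end EssSurj

lemma induced_isEquivalence
    (hvert : ∀ (x : V) (hx : ({x} : Finset V) ∈ K), (A ⟨{x}, hx⟩).IsEquivalence)
    (hedgefull : ∀ (x y : V), x ≠ y → ∀ he : ({x, y} : Finset V) ∈ K,
      (A ⟨{x, y}, he⟩).Full)
    (hedgefaithful : ∀ (x y : V), x ≠ y → ∀ he : ({x, y} : Finset V) ∈ K,
      (A ⟨{x, y}, he⟩).Faithful)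
    (hfacefaithful : ∀ (x y z : V), x ≠ y → y ≠ z → x ≠ z →
      ∀ hF : ({x, y, z} : Finset V) ∈ K, (A ⟨{x, y, z}, hF⟩).Faithful) :
    (inducedDescFunctor hA).IsEquivalence := by
  refine { full := ?_, faithful := ?_, essSurj := ?_ }
  · exact induced_faithful hA (fun x hx => letI := hvert x hx; inferInstance)
  · exact induced_full hA (fun x hx => letI := hvert x hx; inferInstance) hedgefaithful
  · constructor
    intro Y
    obtain ⟨i⟩ := induced_essSurj_iso hA hvert Y hedgefull hedgefaithful hfacefaithful
    exact ⟨_, ⟨i⟩⟩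

end Main

/-- if a functor `A` between categories over a connected (≤2)-dimensional
simplicial complex `Σ` is an equivalence on vertices, fully faithful on edges and
faithful on 2-faces, then the induced functor between descent categories is an
equivalence of categories. -/
theorem statement11 {V : Type w} [DecidableEq V] {K : Set (Finset V)}
    (hne : ∃ x : V, ({x} : Finset V) ∈ K)
    (hfaces : ∀ F ∈ K, Finset.Nonempty F)
    (hcard : ∀ F ∈ K, F.card ≤ 3)
    (hdown : ∀ F ∈ K, ∀ F' : Finset V, F' ⊆ F → F'.Nonempty → F' ∈ K)
    (hconn : ∀ x y : V, ({x} : Finset V) ∈ K → ({y} : Finset V) ∈ K →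
      Relation.ReflTransGen (fun a b : V => ({a, b} : Finset V) ∈ K) x y)
    (D : CatOver.{w, v, u} K) (E : CatOver.{w, v', u'} K)
    (A : ∀ F : Face K, D.C F ⥤ E.C F)
    (hA : ∀ (F₁ F₂ : Face K) (h : F₁.1 ⊆ F₂.1),
      D.tr F₁ F₂ h ⋙ A F₂ = A F₁ ⋙ E.tr F₁ F₂ h)
    (hvert : ∀ (x : V) (hx : ({x} : Finset V) ∈ K), (A ⟨{x}, hx⟩).IsEquivalence)
    (hedgefull : ∀ (x y : V), x ≠ y → ∀ he : ({x, y} : Finset V) ∈ K,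
      (A ⟨{x, y}, he⟩).Full)
    (hedgefaithful : ∀ (x y : V), x ≠ y → ∀ he : ({x, y} : Finset V) ∈ K,
      (A ⟨{x, y}, he⟩).Faithful)
    (hfacefaithful : ∀ (x y z : V), x ≠ y → y ≠ z → x ≠ z →
      ∀ hF : ({x, y, z} : Finset V) ∈ K, (A ⟨{x, y, z}, hF⟩).Faithful) :
    (∃ A' : DescentObj D ⥤ DescentObj E, IsInduced D E A A') ∧
      ∀ A' : DescentObj D ⥤ DescentObj E, IsInduced D E A A' → A'.IsEquivalence := by
  refine ⟨⟨inducedDescFunctor hA, isInduced_inducedDescFunctor hA⟩, fun A' h => ?_⟩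
  rw [isInduced_unique h (isInduced_inducedDescFunctor hA)]
  exact induced_isEquivalence hA hvert hedgefull hedgefaithful hfacefaithful
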